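/- Let f_w be a d-layer ReLU network with weight matrices W₁, …, W_d all having spectral norm equal to β, let B > 0 and let x be an input with ‖x‖₂ ≤ B. Let U₁, …, U_d be perturbation matrices with ‖U_i‖₂ ≤ (1/d)‖W_i‖₂ for every i, and let f_{w+u} be the network with weights W_i + U_i. Then ‖f_{w+u}(x) − f_w(x)‖₂ ≤ e · B · β^{d−1} · Σ_{i=1}^d ‖U_i‖₂. -/

import Mathlib

/-- The spectral norm (largest singular value, i.e. the `ℓ₂ → ℓ₂` operator norm)
of a rectangular matrix. -/
noncomputable def matrixSpectralNorm {𝕜 : Type*} [RCLike 𝕜] {m n : Type*} [Fintype m] [Fintype n]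
    [DecidableEq n] (A : Matrix m n 𝕜) : ℝ :=
  ‖LinearMap.toContinuousLinearMap (Matrix.toEuclideanLin A)‖

/-- The Euclidean (`ℓ₂`) norm of a finite real vector. -/
noncomputable def vecNorm {n : Type*} [Fintype n] (x : n → ℝ) : ℝ :=
  Real.sqrt (∑ i, x i ^ 2)

/-- The activations of a ReLU network: `netFwd dims W x 0 = x`, and
`netFwd dims W x (l+1) = W_l (φ (netFwd dims W x l))` where the coordinatewise ReLU
`φ(z) = max(z,0)` is applied between layers (but not to the input `x`), so that
`netFwd dims W x d = W_{d-1} φ(W_{d-2} φ(⋯ φ(W_0 x)))`. -/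
noncomputable def netFwd (dims : ℕ → ℕ)
    (W : ∀ l : ℕ, Matrix (Fin (dims (l + 1))) (Fin (dims l)) ℝ)
    (x : Fin (dims 0) → ℝ) : ∀ l : ℕ, Fin (dims l) → ℝ
  | 0 => x
  | l + 1 => (W l).mulVec
      (fun i => if l = 0 then netFwd dims W x l i else max (netFwd dims W x l i) 0)


lemma vecNorm_eq {n : Type*} [Fintype n] (x : n → ℝ) :
    vecNorm x = ‖(WithLp.equiv 2 (n → ℝ)).symm x‖ := by
  rw [EuclideanSpace.norm_eq]
  simp [vecNorm, sq_abs]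

lemma vecNorm_nonneg {n : Type*} [Fintype n] (x : n → ℝ) : 0 ≤ vecNorm x :=
  Real.sqrt_nonneg _

lemma matrixSpectralNorm_nonneg {m n : Type*} [Fintype m] [Fintype n] [DecidableEq n]
    (A : Matrix m n ℝ) : 0 ≤ matrixSpectralNorm A := norm_nonneg _

lemma mulVec_vecNorm_le {m n : Type*} [Fintype m] [Fintype n] [DecidableEq n]
    (A : Matrix m n ℝ) (v : n → ℝ) :
    vecNorm (A.mulVec v) ≤ matrixSpectralNorm A * vecNorm v := by
  rw [vecNorm_eq, vecNorm_eq]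
  exact (LinearMap.toContinuousLinearMap (Matrix.toEuclideanLin A)).le_opNorm ((WithLp.equiv 2 (n → ℝ)).symm v)

lemma vecNorm_add_le {n : Type*} [Fintype n] (u v : n → ℝ) :
    vecNorm (fun i => u i + v i) ≤ vecNorm u + vecNorm v := by
  rw [vecNorm_eq, vecNorm_eq, vecNorm_eq]
  exact norm_add_le ((WithLp.equiv 2 (n → ℝ)).symm u) ((WithLp.equiv 2 (n → ℝ)).symm v)

lemma vecNorm_mono {n : Type*} [Fintype n] (u v : n → ℝ) (h : ∀ i, |u i| ≤ |v i|) :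
    vecNorm u ≤ vecNorm v := by
  apply Real.sqrt_le_sqrt
  apply Finset.sum_le_sum
  intro i _
  rw [← sq_abs (u i), ← sq_abs (v i)]
  exact pow_le_pow_left₀ (abs_nonneg _) (h i) 2

lemma relu_lip {n : Type*} [Fintype n] (u v : n → ℝ) :
    vecNorm (fun i => max (u i) 0 - max (v i) 0) ≤ vecNorm (fun i => u i - v i) :=
  vecNorm_mono _ _ fun i => abs_max_sub_max_le_abs _ _ _

lemma relu_le {n : Type*} [Fintype n] (u : n → ℝ) :
    vecNorm (fun i => max (u i) 0) ≤ vecNorm u :=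
  vecNorm_mono _ _ fun i => by
    rcases le_or_gt (u i) 0 with h | h
    · simp [max_eq_right h, abs_nonneg]
    · simp [max_eq_left h.le]


/-- the perturbation bound, Lemma 2.2 of the paper: for a `d`-layer
ReLU network whose weight matrices all have spectral norm `β`, and perturbations with
`‖Uᵢ‖₂ ≤ (1/d)‖Wᵢ‖₂`, the output change on an input of norm at most `B` is bounded by
`e · B · β^{d-1} · Σᵢ ‖Uᵢ‖₂`. -/
theorem stmt10 (d : ℕ) (hd : 1 ≤ d) (dims : ℕ → ℕ)
    (W U : ∀ l : ℕ, Matrix (Fin (dims (l + 1))) (Fin (dims l)) ℝ)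
    (β B : ℝ) (hB : 0 < B)
    (hW : ∀ l < d, matrixSpectralNorm (W l) = β)
    (hU : ∀ l < d, matrixSpectralNorm (U l) ≤ (1 / (d : ℝ)) * matrixSpectralNorm (W l))
    (x : Fin (dims 0) → ℝ) (hx : vecNorm x ≤ B) :
    vecNorm (fun j => netFwd dims (fun l => W l + U l) x d j - netFwd dims W x d j)
      ≤ Real.exp 1 * B * β ^ (d - 1) * ∑ l ∈ Finset.range d, matrixSpectralNorm (U l) := by
  have hd0 : (0:ℝ) < d := by exact_mod_cast hd
  have hβ : 0 ≤ β := (hW 0 hd) ▸ matrixSpectralNorm_nonneg (W 0)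
  set f := netFwd dims W x with hf
  set g := netFwd dims (fun l => W l + U l) x with hg
  set t : ℝ := 1 + 1/d with ht
  have ht1 : (1:ℝ) ≤ t := by
    rw [ht]
    have : 0 ≤ 1/(d:ℝ) := by positivity
    linarith
  set S : ℕ → ℝ := fun l => ∑ i ∈ Finset.range l, matrixSpectralNorm (U i) with hS
  -- norm of clean activations
  have hb : ∀ l, l ≤ d → vecNorm (f l) ≤ β ^ l * B := by
    intro l
    induction l with
    | zero => intro _; simpa [hf, netFwd] using hx
    | succ l ih =>
      intro hl
      have hl' : l < d := hl
      have ihl := ih (le_of_lt hl')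
      have step : vecNorm (f (l+1)) ≤ matrixSpectralNorm (W l) *
          vecNorm (fun i => if l = 0 then f l i else max (f l i) 0) :=
        mulVec_vecNorm_le _ _
      have hrelu : vecNorm (fun i => if l = 0 then f l i else max (f l i) 0)
          ≤ vecNorm (f l) := by
        rcases Nat.eq_zero_or_pos l with h0 | h0
        · simp [h0]
        · have : l ≠ 0 := h0.ne'
          simpa [this] using relu_le (f l)
      calc vecNorm (f (l+1)) ≤ β * vecNorm (f l) := by
            rw [hW l hl'] at step; exact step.trans (by
              exact mul_le_mul_of_nonneg_left hrelu hβ)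
        _ ≤ β * (β ^ l * B) := mul_le_mul_of_nonneg_left ihl hβ
        _ = β ^ (l+1) * B := by ring
  -- main perturbation induction
  have ha : ∀ l, l ≤ d →
      vecNorm (fun j => g l j - f l j) ≤ t ^ l * (β ^ (l-1) * (B * S l)) := by
    intro l
    induction l with
    | zero =>
      intro _
      have h0 : (fun j => g 0 j - f 0 j) = fun _ => (0:ℝ) := by
        funext j; show x j - x j = 0; ring
      rw [h0]
      simp [hS, vecNorm]
    | succ l ih =>
      intro hl
      have hl' : l < d := hl
      have ihl := ih (le_of_lt hl')
      have hu : matrixSpectralNorm (U l) ≤ (1/(d:ℝ)) * β := by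
        have := hU l hl'; rwa [hW l hl'] at this
      set al := vecNorm (fun j => g l j - f l j) with hal
      set ul := matrixSpectralNorm (U l) with hul
      have hal0 : 0 ≤ al := vecNorm_nonneg _
      have hul0 : 0 ≤ ul := matrixSpectralNorm_nonneg _
      set φf : Fin (dims l) → ℝ := fun i => if l = 0 then f l i else max (f l i) 0 with hφf
      set φg : Fin (dims l) → ℝ := fun i => if l = 0 then g l i else max (g l i) 0 with hφg
      have key : (fun j => g (l+1) j - f (l+1) j)
          = fun j => (W l).mulVec (fun i => φg i - φf i) j + (U l).mulVec φg j := by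
        funext j
        show ((W l + U l).mulVec φg) j - ((W l).mulVec φf) j = _
        have h1 : (W l + U l).mulVec φg = (W l).mulVec φg + (U l).mulVec φg :=
          Matrix.add_mulVec _ _ _
        have h2 : (W l).mulVec (fun i => φg i - φf i)
            = (W l).mulVec φg - (W l).mulVec φf := Matrix.mulVec_sub _ _ _
        rw [h1, h2]
        simp only [Pi.add_apply, Pi.sub_apply]
        ring
      have hdiff : vecNorm (fun i => φg i - φf i) ≤ al := by
        rcases Nat.eq_zero_or_pos l with h0 | h0
        · simp only [hφf, hφg, h0, if_pos]
          exact le_of_eq rfl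
        · have hne : l ≠ 0 := h0.ne'
          simp only [hφf, hφg, hne, if_neg, if_false]
          exact relu_lip (g l) (f l)
      have hφg_le : vecNorm φg ≤ al + β ^ l * B := by
        have h1 : vecNorm φg ≤ vecNorm (g l) := by
          rcases Nat.eq_zero_or_pos l with h0 | h0
          · simp only [hφg, h0, if_pos]; exact le_of_eq rfl
          · have hne : l ≠ 0 := h0.ne'
            simp only [hφg, hne, if_false]
            exact relu_le (g l)
        have h2 : vecNorm (g l) ≤ al + vecNorm (f l) := by
          have : (fun j => g l j) = fun j => (g l j - f l j) + f l j := by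
            funext j; ring
          calc vecNorm (g l) = vecNorm (fun j => (g l j - f l j) + f l j) := by rw [← this]
            _ ≤ al + vecNorm (f l) := vecNorm_add_le _ _
        have h3 := hb l (le_of_lt hl')
        linarith
      have bound : vecNorm (fun j => g (l+1) j - f (l+1) j)
          ≤ β * al + ul * (al + β ^ l * B) := by
        rw [key]
        calc vecNorm (fun j => (W l).mulVec (fun i => φg i - φf i) j + (U l).mulVec φg j)
            ≤ vecNorm ((W l).mulVec (fun i => φg i - φf i)) + vecNorm ((U l).mulVec φg) :=
              vecNorm_add_le _ _
          _ ≤ matrixSpectralNorm (W l) * vecNorm (fun i => φg i - φf i)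
              + matrixSpectralNorm (U l) * vecNorm φg :=
              add_le_add (mulVec_vecNorm_le _ _) (mulVec_vecNorm_le _ _)
          _ ≤ β * al + ul * (al + β ^ l * B) := by
              rw [hW l hl']
              exact add_le_add (mul_le_mul_of_nonneg_left hdiff hβ)
                (mul_le_mul_of_nonneg_left hφg_le hul0)
      have hSl0 : 0 ≤ S l := Finset.sum_nonneg fun i _ => matrixSpectralNorm_nonneg _
      have hSsucc : S (l+1) = S l + ul := Finset.sum_range_succ _ _
      rw [hSsucc]
      rcases Nat.eq_zero_or_pos l with h0 | h0
      · subst h0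
        have ha0 : al = 0 := le_antisymm (by simpa [hS, vecNorm] using ihl) hal0
        have hS0 : S 0 = 0 := by simp [hS]
        rw [hS0]
        have : vecNorm (fun j => g 1 j - f 1 j) ≤ ul * B := by
          rw [ha0] at bound
          simpa using bound
        have htp : (1:ℝ) ≤ t ^ 1 := by simpa using ht1
        have hulB : 0 ≤ ul * B := mul_nonneg hul0 hB.le
        calc vecNorm (fun j => g 1 j - f 1 j) ≤ ul * B := this
          _ ≤ t ^ 1 * (ul * B) := le_mul_of_one_le_left hulB htp
          _ = t ^ 1 * (β ^ (1-1) * (B * (0 + ul))) := by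
              have h11 : (1:ℕ) - 1 = 0 := rfl
              rw [h11, pow_zero, zero_add, one_mul]; ring
      · -- l ≥ 1
        have hβγ : β * β ^ (l-1) = β ^ l := by
          rw [← pow_succ']
          congr 1
          omega
        set c := t ^ l * (β ^ (l-1) * (B * S l)) with hc
        have hc0 : 0 ≤ c := by
          apply mul_nonneg (by positivity)
          exact mul_nonneg (pow_nonneg hβ _) (mul_nonneg hB.le hSl0)
        have htp : (1:ℝ) ≤ t ^ (l+1) := one_le_pow₀ ht1
        have step2 : β * al + ul * (al + β ^ l * B)
            ≤ β * c + (1/d * β) * c + ul * (β ^ l * B) := by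
          have e1 : β * al ≤ β * c := mul_le_mul_of_nonneg_left ihl hβ
          have e2 : ul * al ≤ ul * c := mul_le_mul_of_nonneg_left ihl hul0
          have e3 : ul * c ≤ (1/d * β) * c := mul_le_mul_of_nonneg_right hu hc0
          nlinarith [mul_nonneg hul0 (mul_nonneg (pow_nonneg hβ l) hB.le)]
        have step3 : β * c + (1/d * β) * c = t ^ (l+1) * (β ^ l * (B * S l)) := by
          rw [hc]
          have : t ^ (l+1) = t * t ^ l := by ring
          rw [this]
          linear_combination ((t * t^l) * (B * S l)) * hβγ
        have step4 : ul * (β ^ l * B) ≤ t ^ (l+1) * (β ^ l * (B * ul)) := by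
          have h0 : 0 ≤ ul * (β ^ l * B) :=
            mul_nonneg hul0 (mul_nonneg (pow_nonneg hβ _) hB.le)
          calc ul * (β ^ l * B) ≤ t ^ (l+1) * (ul * (β ^ l * B)) :=
                le_mul_of_one_le_left h0 htp
            _ = t ^ (l+1) * (β ^ l * (B * ul)) := by ring
        have hfin : β ^ ((l+1)-1) = β ^ l := by norm_num
        rw [hfin]
        calc vecNorm (fun j => g (l+1) j - f (l+1) j)
            ≤ β * al + ul * (al + β ^ l * B) := bound
          _ ≤ β * c + (1/d * β) * c + ul * (β ^ l * B) := step2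
          _ = t ^ (l+1) * (β ^ l * (B * S l)) + ul * (β ^ l * B) := by rw [step3]
          _ ≤ t ^ (l+1) * (β ^ l * (B * S l)) + t ^ (l+1) * (β ^ l * (B * ul)) :=
              add_le_add_right step4 _
          _ = t ^ (l+1) * (β ^ l * (B * (S l + ul))) := by ring
  -- conclude
  have had := ha d le_rfl
  have htexp : t ^ d ≤ Real.exp 1 := by
    have h1 : t ≤ Real.exp (1/d) := by
      have := Real.add_one_le_exp (1/(d:ℝ))
      linarith [this]
    have h2 : t ^ d ≤ Real.exp (1/d) ^ d :=
      pow_le_pow_left₀ (by linarith) h1 d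
    have h3 : Real.exp (1/(d:ℝ)) ^ d = Real.exp ((d:ℝ) * (1/d)) := by
      rw [← Real.exp_nat_mul]
    have h4 : (d:ℝ) * (1/d) = 1 := by
      field_simp
    rw [h3, h4] at h2
    exact h2
  have hX : 0 ≤ β ^ (d-1) * (B * S d) := by
    refine mul_nonneg (pow_nonneg hβ _) (mul_nonneg hB.le ?_)
    exact Finset.sum_nonneg fun i _ => matrixSpectralNorm_nonneg _
  calc vecNorm (fun j => g d j - f d j) ≤ t ^ d * (β ^ (d-1) * (B * S d)) := had
    _ ≤ Real.exp 1 * (β ^ (d-1) * (B * S d)) := mul_le_mul_of_nonneg_right htexp hX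
    _ = Real.exp 1 * B * β ^ (d-1) * S d := by ring
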